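/- Let H be an infinite-dimensional real Hilbert space equipped with bounded operators Rᵢ, Rⱼ : H →L[ℝ] H satisfying Rᵢ ∘ Rᵢ = −1, Rⱼ ∘ Rⱼ = −1, Rᵢ ∘ Rⱼ = −(Rⱼ ∘ Rᵢ), Rᵢ† = −Rᵢ, and Rⱼ† = −Rⱼ (so that H is a quaternionic Hilbert space viewed as a real Hilbert space). Let T : H →L[ℝ] H be a bounded operator commuting with Rᵢ and with Rⱼ. Then there exist n ∈ ℕ, real scalars c : Fin n → ℝ, and orthogonal operators U : Fin n → (H →L[ℝ] H), each commuting with Rᵢ and with Rⱼ, such that T = ∑ i, c i • U i. -/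

import Mathlib

/-!
Auxiliary material for STATEMENT 13: on a quaternionic Hilbert space every
bounded `ℍ`-linear operator is a finite real linear combination of orthogonal
`ℍ`-linear operators.

We construct:
* `qd` : the Taylor coefficients of `1 - √(1-x)`, defined by the Catalan-type
  recurrence `qd n = (1/2) ∑_{k=1}^{n-1} qd k qd (n-k)`, with `∑ qd ≤ 1`;
* `exists_sqrt` : a square root `S` of `1 - X` (for `‖X‖ ≤ 1`, `X` self-adjoint)
  commuting with everything that commutes with `X`;
* `exists_complex_structure` : for a self-adjoint `A` commuting with `Ri, Rj`,
  a skew-adjoint complex structure `J` commuting with `Ri, Rj, A`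
  (via a Zorn's lemma argument producing `M` with `H = M ⊕ Rj M`).
-/


open Finset in
noncomputable def qd : ℕ → ℝ
  | 0 => 0
  | 1 => 1/2
  | (n+2) => (1/2) * ∑ k ∈ (Finset.Ico 1 (n+2)).attach,
      qd k.1 * qd (n+2-k.1)
  decreasing_by
  · have := Finset.mem_Ico.mp k.2; omega
  · have := Finset.mem_Ico.mp k.2; omega

lemma qd_zero : qd 0 = 0 := by rw [qd]
lemma qd_one : qd 1 = 1/2 := by rw [qd]
lemma qd_def {n : ℕ} (hn : 2 ≤ n) :
    qd n = (1/2) * ∑ k ∈ Finset.Ico 1 n, qd k * qd (n-k) := by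
  obtain ⟨m, rfl⟩ : ∃ m, n = m + 2 := ⟨n - 2, by omega⟩
  rw [qd, Finset.sum_attach (Finset.Ico 1 (m+2)) (fun k => qd k * qd (m+2-k))]

lemma qd_nonneg : ∀ n, 0 ≤ qd n := by
  intro n
  induction n using Nat.strong_induction_on with
  | _ n ih =>
    match n with
    | 0 => simp [qd_zero]
    | 1 => norm_num [qd_one]
    | (m+2) =>
      rw [qd_def (by omega)]
      refine mul_nonneg (by norm_num) (Finset.sum_nonneg fun k hk => ?_)
      have hk' := Finset.mem_Ico.mp hk
      exact mul_nonneg (ih k (by omega)) (ih (m+2-k) (by omega))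

open Finset in
lemma qd_sum_le : ∀ N, ∑ n ∈ Finset.range N, qd n ≤ 1 := by
  intro N
  induction N with
  | zero => simp
  | succ N ih =>
    rcases Nat.lt_or_ge N 2 with hN | hN
    · interval_cases N <;> norm_num [Finset.sum_range_succ, qd_zero, qd_one]
    · have h2 : ∑ n ∈ range (N+1), qd n
          = (qd 0 + qd 1) + ∑ n ∈ Ico 2 (N+1), qd n := by
        rw [range_eq_Ico, ← Finset.sum_Ico_consecutive _ (by omega : 0 ≤ 2) (by omega : 2 ≤ N+1)]
        norm_num [Finset.sum_Ico_eq_sum_range, Finset.sum_range_succ]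
      have h3 : ∑ n ∈ Ico 2 (N+1), qd n
          = (1/2) * ∑ n ∈ Ico 2 (N+1), ∑ k ∈ Ico 1 n, qd k * qd (n-k) := by
        rw [Finset.mul_sum]
        exact Finset.sum_congr rfl fun n hn => qd_def (mem_Ico.mp hn).1
      have h4 : ∑ n ∈ Ico 2 (N+1), ∑ k ∈ Ico 1 n, qd k * qd (n-k)
          ≤ (∑ n ∈ range N, qd n) * (∑ n ∈ range N, qd n) := by
        rw [Finset.sum_sigma' (Ico 2 (N+1)) (fun n => Ico 1 n) (fun n k => qd k * qd (n-k))]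
        have himg := Finset.sum_image (f := fun p : ℕ × ℕ => qd p.1 * qd p.2)
          (g := fun x : Σ _ : ℕ, ℕ => (x.2, x.1 - x.2))
          (s := (Ico 2 (N+1)).sigma (fun n => Ico 1 n)) ?inj
        case inj =>
          rintro ⟨n, k⟩ hx ⟨n', k'⟩ hy hxy
          simp only [Finset.mem_coe, Finset.mem_sigma, mem_Ico] at hx hy
          simp only [Prod.mk.injEq] at hxy
          have hn : n = n' := by omega
          subst hn
          have hk : k = k' := hxy.1
          subst hk; rfl
        rw [← himg]
        have hle : ∑ x ∈ Finset.image (fun x : Σ _ : ℕ, ℕ => (x.2, x.1 - x.2))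
            ((Ico 2 (N+1)).sigma fun n => Ico 1 n), qd x.1 * qd x.2
            ≤ ∑ p ∈ (range N) ×ˢ (range N), qd p.1 * qd p.2 := by
          refine Finset.sum_le_sum_of_subset_of_nonneg ?_ ?_
          · intro p hp
            simp only [Finset.mem_image] at hp
            obtain ⟨x, hx, rfl⟩ := hp
            obtain ⟨n, k⟩ := x
            simp only [Finset.mem_sigma, mem_Ico] at hx
            simp only [Finset.mem_product, Finset.mem_range]
            omega
          · intro p _ _
            exact mul_nonneg (qd_nonneg _) (qd_nonneg _)
        refine hle.trans_eq ?_
        rw [Finset.sum_product, ← Finset.sum_mul_sum]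
      calc ∑ n ∈ range (N+1), qd n
          = (qd 0 + qd 1) + ∑ n ∈ Ico 2 (N+1), qd n := h2
        _ ≤ (0 + 1/2) + (1/2) * ((∑ n ∈ range N, qd n) * (∑ n ∈ range N, qd n)) := by
            rw [qd_zero, qd_one, h3]
            have := h4
            nlinarith [h4]
        _ ≤ 1/2 + (1/2) * (1 * 1) := by
            have hnn : 0 ≤ ∑ n ∈ range N, qd n :=
              Finset.sum_nonneg fun n _ => qd_nonneg n
            nlinarith [ih]
        _ ≤ 1 := by norm_num

lemma qd_summable : Summable qd :=
  summable_of_sum_range_le qd_nonneg qd_sum_le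

open Finset in
lemma qd_antidiagonal {n : ℕ} (hn : 2 ≤ n) :
    ∑ kl ∈ Finset.HasAntidiagonal.antidiagonal n, qd kl.1 * qd kl.2 = 2 * qd n := by
  rw [Finset.Nat.sum_antidiagonal_eq_sum_range_succ (fun a b => qd a * qd b)]
  rw [Finset.sum_range_succ, Nat.sub_self, qd_zero, mul_zero, add_zero]
  rw [Finset.range_eq_Ico, Finset.sum_eq_sum_Ico_succ_bot (by omega : 0 < n)]
  rw [qd_zero, zero_mul, zero_add, qd_def hn]
  ring

set_option maxHeartbeats 1000000 in
set_option synthInstance.maxHeartbeats 200000 in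
variable {H : Type*} [NormedAddCommGroup H] [InnerProductSpace ℝ H] [CompleteSpace H]
  [Nontrivial H] in
lemma exists_sqrt (X : H →L[ℝ] H) (hX : ‖X‖ ≤ 1) (hXsa : IsSelfAdjoint X) :
    ∃ S : H →L[ℝ] H, S * S = 1 - X ∧ IsSelfAdjoint S ∧
      ∀ R : H →L[ℝ] H, R * X = X * R → R * S = S * R := by
  have hnorm : ∀ n, ‖qd n • X^n‖ ≤ qd n := by
    intro n
    rw [norm_smul (qd n) (X^n), Real.norm_eq_abs, abs_of_nonneg (qd_nonneg n)]
    have hXn : ‖X^n‖ ≤ 1 := by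
      rcases Nat.eq_zero_or_pos n with rfl | hn
      · simp
      · calc ‖X^n‖ ≤ ‖X‖^n := norm_pow_le' X hn
          _ ≤ 1 := pow_le_one₀ (norm_nonneg X) hX
    nlinarith [qd_nonneg n, norm_nonneg (X^n)]
  have hsn : Summable (fun n => ‖qd n • X^n‖) :=
    Summable.of_nonneg_of_le (fun n => norm_nonneg _) hnorm qd_summable
  have hs : Summable (fun n => qd n • X^n) := hsn.of_norm
  set W : H →L[ℝ] H := ∑' n, qd n • X^n with hW
  have h1 : W * W = ∑' n, (∑ kl ∈ Finset.HasAntidiagonal.antidiagonal n, qd kl.1 * qd kl.2) • X^n := by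
    rw [hW, tsum_mul_tsum_eq_tsum_sum_antidiagonal_of_summable_norm hsn hsn]
    refine tsum_congr fun n => ?_
    rw [Finset.sum_smul]
    refine Finset.sum_congr rfl fun kl hkl => ?_
    rw [smul_mul_smul_comm, ← pow_add, Finset.HasAntidiagonal.mem_antidiagonal.mp hkl]
  have hs2 : Summable (fun n => (∑ kl ∈ Finset.HasAntidiagonal.antidiagonal n, qd kl.1 * qd kl.2) • X^n) := by
    have := (summable_norm_sum_mul_antidiagonal_of_summable_norm (f := fun n => qd n • X^n)
      (g := fun n => qd n • X^n) hsn hsn).of_norm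
    refine this.congr fun n => ?_
    rw [Finset.sum_smul]
    refine Finset.sum_congr rfl fun kl hkl => ?_
    rw [smul_mul_smul_comm, ← pow_add, Finset.HasAntidiagonal.mem_antidiagonal.mp hkl]
  have h3 : W + W - W * W = X := by
    rw [h1, hW, ← Summable.tsum_add hs hs, ← Summable.tsum_sub (hs.add hs) hs2]
    rw [tsum_eq_single 1 ?hzero]
    case hzero =>
      intro n hn
      rcases Nat.lt_or_ge n 2 with h2 | h2
      · interval_cases n
        · simp [qd_zero]
        · exact absurd rfl hn
      · rw [qd_antidiagonal h2, ← add_smul, ← sub_smul]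
        have : qd n + qd n - 2 * qd n = 0 := by ring
        rw [this, zero_smul]
    · rw [qd_one]
      have he1 : ∑ kl ∈ Finset.HasAntidiagonal.antidiagonal 1, qd kl.1 * qd kl.2 = 0 := by
        rw [Finset.Nat.sum_antidiagonal_eq_sum_range_succ (fun a b => qd a * qd b)]
        simp [Finset.sum_range_succ, qd_zero]
      rw [he1, ← add_smul, ← sub_smul]
      norm_num
  refine ⟨1 - W, ?_, ?_, ?_⟩
  · have : (1 - W) * (1 - W) = 1 - (W + W - W * W) := by noncomm_ring
    rw [this, h3]
  · have hWsa : IsSelfAdjoint W := by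
      rw [IsSelfAdjoint, hW, tsum_star]
      refine tsum_congr fun n => ?_
      rw [star_smul, star_pow, hXsa.star_eq, star_trivial]
    exact (IsSelfAdjoint.one _).sub hWsa
  · intro R hRX
    have hcX : Commute R X := hRX
    have hc : ∀ n, R * (qd n • X^n) = (qd n • X^n) * R := fun n => by
      rw [mul_smul_comm, smul_mul_assoc, (hcX.pow_right n).eq]
    have hRW : R * W = W * R := by
      have e1 : R * W = ∑' n, R * (qd n • X^n) := (hs.tsum_mul_left R).symm
      have e2 : W * R = ∑' n, (qd n • X^n) * R := (hs.tsum_mul_right R).symm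
      rw [e1, e2]
      exact tsum_congr hc
    rw [mul_sub, sub_mul, mul_one, one_mul, hRW]


open ContinuousLinearMap in
open RealInnerProductSpace in
set_option maxHeartbeats 2000000 in
set_option synthInstance.maxHeartbeats 400000 in
lemma exists_complex_structure
    {H : Type*} [NormedAddCommGroup H] [InnerProductSpace ℝ H] [CompleteSpace H]
    (Ri Rj A : H →L[ℝ] H)
    (hRi2 : Ri * Ri = -1) (hRj2 : Rj * Rj = -1) (hRiRj : Ri * Rj = -(Rj * Ri))
    (hRiS : star Ri = -Ri) (hRjS : star Rj = -Rj)
    (hAsa : IsSelfAdjoint A) (hARi : A * Ri = Ri * A) (hARj : A * Rj = Rj * A) :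
    ∃ J : H →L[ℝ] H, J * J = -1 ∧ star J = -J ∧
      J * Ri = Ri * J ∧ J * Rj = Rj * J ∧ J * A = A * J := by
  -- pointwise operator identities
  have hRj2' : ∀ x : H, Rj (Rj x) = -x := by
    intro x
    have := ContinuousLinearMap.ext_iff.mp hRj2 x
    simpa [ContinuousLinearMap.mul_apply] using this
  have hRi2' : ∀ x : H, Ri (Ri x) = -x := by
    intro x
    have := ContinuousLinearMap.ext_iff.mp hRi2 x
    simpa [ContinuousLinearMap.mul_apply] using this
  have hRiRj' : ∀ x : H, Ri (Rj x) = -Rj (Ri x) := by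
    intro x
    have := ContinuousLinearMap.ext_iff.mp hRiRj x
    simpa [ContinuousLinearMap.mul_apply] using this
  have hAnRj : ∀ (n : ℕ) (x : H), (A^n) (Rj x) = Rj ((A^n) x) := by
    intro n x
    have hc : Commute A Rj := hARj
    have := ContinuousLinearMap.ext_iff.mp ((hc.pow_left n).eq) x
    simpa [ContinuousLinearMap.mul_apply] using this
  have hAnRi : ∀ (n : ℕ) (x : H), (A^n) (Ri x) = Ri ((A^n) x) := by
    intro n x
    have hc : Commute A Ri := hARi
    have := ContinuousLinearMap.ext_iff.mp ((hc.pow_left n).eq) x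
    simpa [ContinuousLinearMap.mul_apply] using this
  -- basic inner-product identities
  have hinRj : ∀ x y : H, ⟪x, Rj y⟫ = -⟪Rj x, y⟫ := by
    intro x y
    have h1 : ⟪(ContinuousLinearMap.adjoint Rj) x, y⟫ = ⟪x, Rj y⟫ :=
      ContinuousLinearMap.adjoint_inner_left Rj y x
    rw [← star_eq_adjoint, hRjS] at h1
    rw [← h1]; simp
  have hinRi : ∀ x y : H, ⟪x, Ri y⟫ = -⟪Ri x, y⟫ := by
    intro x y
    have h1 : ⟪(ContinuousLinearMap.adjoint Ri) x, y⟫ = ⟪x, Ri y⟫ :=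
      ContinuousLinearMap.adjoint_inner_left Ri y x
    rw [← star_eq_adjoint, hRiS] at h1
    rw [← h1]; simp
  have hinA : ∀ (n : ℕ) (x y : H), ⟪(A^n) x, y⟫ = ⟪x, (A^n) y⟫ := by
    intro n x y
    have hsa : IsSelfAdjoint (A^n) := hAsa.pow n
    have h1 : ⟪(ContinuousLinearMap.adjoint (A^n)) x, y⟫ = ⟪x, (A^n) y⟫ :=
      ContinuousLinearMap.adjoint_inner_left (A^n) y x
    rwa [← star_eq_adjoint, hsa.star_eq] at h1
  have hinA1 : ∀ (x y : H), ⟪A x, y⟫ = ⟪x, A y⟫ := by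
    intro x y
    have := hinA 1 x y
    simpa using this
  have hRjRj : ∀ x y : H, ⟪Rj x, Rj y⟫ = ⟪x, y⟫ := by
    intro x y
    rw [hinRj (Rj x) y, hRj2' x]
    simp [inner_neg_left]
  have hRiRi : ∀ x y : H, ⟪Ri x, Ri y⟫ = ⟪x, y⟫ := by
    intro x y
    rw [hinRi (Ri x) y, hRi2' x]
    simp [inner_neg_left]
  -- antisymmetry of (x, y) ↦ ⟪x, Rj y⟫
  have hanti : ∀ x y : H, ⟪x, Rj y⟫ = -⟪y, Rj x⟫ := by
    intro x y
    rw [hinRj x y, real_inner_comm (Rj x) y]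
  -- the Good predicate
  set Good : Submodule ℝ H → Prop := fun E =>
    (∀ x ∈ E, Ri x ∈ E) ∧ (∀ x ∈ E, A x ∈ E) ∧
      (∀ x ∈ E, ∀ y ∈ E, ⟪x, Rj y⟫ = 0) with hGoodDef
  -- Zorn's lemma
  obtain ⟨M, hMmax⟩ : ∃ M, Maximal (· ∈ {E | Good E}) M := by
    refine zorn_le₀ {E | Good E} ?_
    intro c hc hchain
    rcases c.eq_empty_or_nonempty with rfl | hne
    · refine ⟨⊥, ?_, by simp⟩
      refine ⟨?_, ?_, ?_⟩ <;> intro x hx <;>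
        simp only [Submodule.mem_bot] at hx <;> subst hx <;> simp
    · refine ⟨sSup c, ?_, fun E hE => le_sSup hE⟩
      have hdir : DirectedOn (· ≤ ·) c := hchain.directedOn
      have hmem : ∀ x, x ∈ sSup c → ∃ E ∈ c, x ∈ E := fun x hx =>
        (Submodule.mem_sSup_of_directed hne hdir).mp hx
      refine ⟨?_, ?_, ?_⟩
      · intro x hx
        obtain ⟨E, hEc, hxE⟩ := hmem x hx
        exact le_sSup hEc ((hc hEc).1 x hxE)
      · intro x hx
        obtain ⟨E, hEc, hxE⟩ := hmem x hx
        exact le_sSup hEc ((hc hEc).2.1 x hxE)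
      · intro x hx y hy
        obtain ⟨E, hEc, hxE⟩ := hmem x hx
        obtain ⟨F, hFc, hyF⟩ := hmem y hy
        rcases hchain.total hEc hFc with hEF | hFE
        · exact (hc hFc).2.2 x (hEF hxE) y hyF
        · exact (hc hEc).2.2 x hxE y (hFE hyF)
  have hMGood : Good M := hMmax.1
  -- M is closed
  have hMc : M.topologicalClosure ≤ M := by
    refine hMmax.2 ?_ M.le_topologicalClosure
    refine ⟨?_, ?_, ?_⟩
    · intro x hx
      exact map_mem_closure Ri.continuous hx (fun y hy => hMGood.1 y hy)
    · intro x hx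
      exact map_mem_closure A.continuous hx (fun y hy => hMGood.2.1 y hy)
    · intro x hx y hy
      have step1 : ∀ y' ∈ M, ⟪x, Rj y'⟫ = 0 := by
        intro y' hy'
        have hcl : IsClosed {z : H | ⟪Rj y', z⟫ = 0} :=
          isClosed_eq (innerSL ℝ (Rj y')).continuous continuous_const
        have hsub : (M : Set H) ⊆ {z : H | ⟪Rj y', z⟫ = 0} := by
          intro m hm
          have := hMGood.2.2 m hm y' hy'
          simpa [real_inner_comm] using this
        have : x ∈ {z : H | ⟪Rj y', z⟫ = 0} :=
          hcl.closure_subset_iff.mpr hsub hx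
        simpa [real_inner_comm] using this
      have hcl2 : IsClosed {z : H | ⟪x, Rj z⟫ = 0} :=
        isClosed_eq ((innerSL ℝ x).comp Rj).continuous continuous_const
      have hsub2 : (M : Set H) ⊆ {z : H | ⟪x, Rj z⟫ = 0} := fun m hm => step1 m hm
      exact hcl2.closure_subset_iff.mpr hsub2 hy
  have hMclosed : IsClosed (M : Set H) := by
    have : M.topologicalClosure = M := le_antisymm hMc M.le_topologicalClosure
    rw [← this]
    exact M.isClosed_topologicalClosure
  haveI : CompleteSpace M := hMclosed.completeSpace_coe
  -- maximality: no nonzero vector orthogonal to both M and Rj M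
  have key_max : ∀ v : H, v ∈ Mᗮ → (∀ m ∈ M, ⟪v, Rj m⟫ = 0) → v = 0 := by
    intro v hvMo hv2
    by_contra hv0
    have hv1 : ∀ m ∈ M, ⟪v, m⟫ = 0 := (Submodule.mem_orthogonal' M v).mp hvMo
    -- the generating set
    set G : Set H := {u | ∃ n : ℕ, u = (A^n) v ∨ u = Ri ((A^n) v)} with hGdef
    set Z : Submodule ℝ H := Submodule.span ℝ G with hZdef
    have hvG : v ∈ G := ⟨0, Or.inl (by simp)⟩
    have hAnM : ∀ (n : ℕ), ∀ m ∈ M, (A^n) m ∈ M := by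
      intro n
      induction n with
      | zero => intro m hm; simpa using hm
      | succ k ih =>
        intro m hm
        have : (A^(k+1)) m = (A^k) (A m) := by
          rw [pow_succ]; rfl
        rw [this]
        exact ih _ (hMGood.2.1 m hm)
    have hAA : ∀ (m n : ℕ), (A^m) ((A^n) v) = (A^(m+n)) v := by
      intro m n
      rw [← ContinuousLinearMap.mul_apply, ← pow_add]
    -- core identities
    have I1 : ∀ k : ℕ, ⟪(A^k) v, Rj v⟫ = 0 := by
      intro k
      have h1 : ⟪(A^k) v, Rj v⟫ = -⟪(A^k) v, Rj v⟫ := by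
        calc ⟪(A^k) v, Rj v⟫ = ⟪v, (A^k) (Rj v)⟫ := by rw [← hinA k v (Rj v)]
          _ = ⟪v, Rj ((A^k) v)⟫ := by rw [hAnRj]
          _ = -⟪(A^k) v, Rj v⟫ := hanti v ((A^k) v)
      linarith
    have I2 : ∀ k : ℕ, ⟪Ri ((A^k) v), Rj v⟫ = 0 := by
      intro k
      have h1 : ⟪Ri ((A^k) v), Rj v⟫ = -⟪Ri ((A^k) v), Rj v⟫ := by
        calc ⟪Ri ((A^k) v), Rj v⟫
            = -⟪(A^k) v, Ri (Rj v)⟫ := by rw [hinRi ((A^k) v) (Rj v), neg_neg]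
          _ = ⟪(A^k) v, Rj (Ri v)⟫ := by rw [hRiRj']; simp [inner_neg_right]
          _ = -⟪Ri v, Rj ((A^k) v)⟫ := hanti ((A^k) v) (Ri v)
          _ = -⟪Ri v, (A^k) (Rj v)⟫ := by rw [hAnRj]
          _ = -⟪(A^k) (Ri v), Rj v⟫ := by rw [hinA k (Ri v) (Rj v)]
          _ = -⟪Ri ((A^k) v), Rj v⟫ := by rw [hAnRi]
      linarith
    -- generator-generator orthogonality
    have hGen : ∀ g1 ∈ G, ∀ g2 ∈ G, ⟪g1, Rj g2⟫ = 0 := by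
      have case00 : ∀ n m : ℕ, ⟪(A^n) v, Rj ((A^m) v)⟫ = 0 := by
        intro n m
        calc ⟪(A^n) v, Rj ((A^m) v)⟫ = ⟪(A^n) v, (A^m) (Rj v)⟫ := by rw [hAnRj]
          _ = ⟪(A^m) ((A^n) v), Rj v⟫ := (hinA m ((A^n) v) (Rj v)).symm
          _ = ⟪(A^(m+n)) v, Rj v⟫ := by rw [hAA]
          _ = 0 := I1 (m+n)
      have case10 : ∀ n m : ℕ, ⟪Ri ((A^n) v), Rj ((A^m) v)⟫ = 0 := by
        intro n m
        calc ⟪Ri ((A^n) v), Rj ((A^m) v)⟫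
            = ⟪Ri ((A^n) v), (A^m) (Rj v)⟫ := by rw [hAnRj]
          _ = ⟪(A^m) (Ri ((A^n) v)), Rj v⟫ := (hinA m _ (Rj v)).symm
          _ = ⟪Ri ((A^m) ((A^n) v)), Rj v⟫ := by rw [hAnRi]
          _ = ⟪Ri ((A^(m+n)) v), Rj v⟫ := by rw [hAA]
          _ = 0 := I2 (m+n)
      have case01 : ∀ n m : ℕ, ⟪(A^n) v, Rj (Ri ((A^m) v))⟫ = 0 := by
        intro n m
        have h1 : Rj (Ri ((A^m) v)) = -Ri (Rj ((A^m) v)) := by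
          rw [hRiRj' ((A^m) v), neg_neg]
        rw [h1, inner_neg_right, hinRi ((A^n) v) (Rj ((A^m) v))]
        simpa using case10 n m
      have case11 : ∀ n m : ℕ, ⟪Ri ((A^n) v), Rj (Ri ((A^m) v))⟫ = 0 := by
        intro n m
        have h1 : Rj (Ri ((A^m) v)) = -Ri (Rj ((A^m) v)) := by
          rw [hRiRj' ((A^m) v), neg_neg]
        rw [h1, inner_neg_right, hRiRi ((A^n) v) (Rj ((A^m) v))]
        simpa using case00 n m
      rintro g1 ⟨n, hn | hn⟩ g2 ⟨m, hm | hm⟩ <;> subst hn <;> subst hm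
      · exact case00 n m
      · exact case01 n m
      · exact case10 n m
      · exact case11 n m
    -- generator-M orthogonality
    have hGM : ∀ g ∈ G, ∀ m ∈ M, ⟪g, Rj m⟫ = 0 := by
      rintro g ⟨n, hn | hn⟩ m hm <;> subst hn
      · calc ⟪(A^n) v, Rj m⟫ = ⟪v, (A^n) (Rj m)⟫ := hinA n v (Rj m)
          _ = ⟪v, Rj ((A^n) m)⟫ := by rw [hAnRj]
          _ = 0 := hv2 _ (hAnM n m hm)
      · have h1 : ⟪Ri ((A^n) v), Rj m⟫ = -⟪(A^n) v, Ri (Rj m)⟫ := by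
          rw [hinRi ((A^n) v) (Rj m), neg_neg]
        rw [h1, hRiRj' m, inner_neg_right]
        have : ⟪(A^n) v, Rj (Ri m)⟫ = 0 := by
          calc ⟪(A^n) v, Rj (Ri m)⟫ = ⟪v, (A^n) (Rj (Ri m))⟫ := hinA n v _
            _ = ⟪v, Rj ((A^n) (Ri m))⟫ := by rw [hAnRj]
            _ = 0 := hv2 _ (hAnM n _ (hMGood.1 m hm))
        simp only [this, neg_zero]
    have hMG : ∀ m ∈ M, ∀ g ∈ G, ⟪m, Rj g⟫ = 0 := by
      intro m hm g hg
      rw [hanti m g, hGM g hg m hm, neg_zero]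
    -- M ⊔ Z is Good
    have hMZGood : Good (M ⊔ Z) := by
      have hZRi : ∀ z ∈ Z, Ri z ∈ Z := by
        intro z hz
        induction hz using Submodule.span_induction with
        | mem u hu =>
          obtain ⟨n, hn | hn⟩ := hu <;> subst hn
          · exact Submodule.subset_span ⟨n, Or.inr rfl⟩
          · rw [hRi2' ((A^n) v)]
            exact neg_mem (Submodule.subset_span ⟨n, Or.inl rfl⟩)
        | zero => simp
        | add u w _ _ hu hw => rw [map_add]; exact add_mem hu hw
        | smul c u _ hu => rw [map_smul]; exact Submodule.smul_mem _ c hu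
      have hZA : ∀ z ∈ Z, A z ∈ Z := by
        intro z hz
        induction hz using Submodule.span_induction with
        | mem u hu =>
          obtain ⟨n, hn | hn⟩ := hu <;> subst hn
          · refine Submodule.subset_span ⟨n+1, Or.inl ?_⟩
            rw [pow_succ']; rfl
          · refine Submodule.subset_span ⟨n+1, Or.inr ?_⟩
            have : A (Ri ((A^n) v)) = Ri (A ((A^n) v)) := by
              have := ContinuousLinearMap.ext_iff.mp hARi ((A^n) v)
              simpa [ContinuousLinearMap.mul_apply] using this
            rw [this, pow_succ']; rfl
        | zero => simp
        | add u w _ _ hu hw => rw [map_add]; exact add_mem hu hw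
        | smul c u _ hu => rw [map_smul]; exact Submodule.smul_mem _ c hu
      refine ⟨?_, ?_, ?_⟩
      · intro x hx
        obtain ⟨m, hm, z, hz, rfl⟩ := Submodule.mem_sup.mp hx
        rw [map_add]
        exact Submodule.mem_sup.mpr ⟨Ri m, hMGood.1 m hm, Ri z, hZRi z hz, rfl⟩
      · intro x hx
        obtain ⟨m, hm, z, hz, rfl⟩ := Submodule.mem_sup.mp hx
        rw [map_add]
        exact Submodule.mem_sup.mpr ⟨A m, hMGood.2.1 m hm, A z, hZA z hz, rfl⟩
      · -- orthogonality on M ⊔ Z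
        have step1 : ∀ x, (x ∈ M ∨ x ∈ G) → ∀ y ∈ M ⊔ Z, ⟪x, Rj y⟫ = 0 := by
          intro x hx y hy
          obtain ⟨m, hm, z, hz, rfl⟩ := Submodule.mem_sup.mp hy
          rw [map_add, inner_add_right]
          have hzero1 : ⟪x, Rj m⟫ = 0 := by
            rcases hx with hxM | hxG
            · exact hMGood.2.2 x hxM m hm
            · exact hGM x hxG m hm
          have hzero2 : ⟪x, Rj z⟫ = 0 := by
            have : ∀ z' ∈ Z, ⟪x, Rj z'⟫ = 0 := by
              intro z' hz'
              induction hz' using Submodule.span_induction with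
              | mem u hu =>
                rcases hx with hxM | hxG
                · exact hMG x hxM u hu
                · exact hGen x hxG u hu
              | zero => simp
              | add u w _ _ hu hw => rw [map_add, inner_add_right, hu, hw]; ring
              | smul c u _ hu => rw [map_smul, inner_smul_right, hu]; ring
            exact this z hz
          rw [hzero1, hzero2]; ring
        intro x hx y hy
        have hzZ : ∀ z' ∈ Z, ⟪z', Rj y⟫ = 0 := by
          intro z' hz'
          induction hz' using Submodule.span_induction with
          | mem u hu => exact step1 u (Or.inr hu) y hy
          | zero => simp
          | add u w _ _ hu hw => rw [inner_add_left, hu, hw]; ring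
          | smul c u _ hu => rw [inner_smul_left, hu]; ring
        obtain ⟨m, hm, z, hz, rfl⟩ := Submodule.mem_sup.mp hx
        rw [inner_add_left, step1 m (Or.inl hm) y hy, hzZ z hz]
        ring
    -- contradiction with maximality
    have hle : M ⊔ Z ≤ M := hMmax.2 hMZGood le_sup_left
    have hvM : v ∈ M := hle (Submodule.mem_sup_right (Submodule.subset_span hvG))
    exact hv0 (inner_self_eq_zero.mp (hv1 v hvM))
  -- orthogonal projection onto M
  set P : H →L[ℝ] H := M.subtypeL ∘L M.orthogonalProjectionOnto with hPdef
  have hPapp : ∀ x : H, P x = (M.orthogonalProjectionOnto x : H) := fun x => rfl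
  have hPmem : ∀ x : H, P x ∈ M := fun x => (M.orthogonalProjectionOnto x).2
  have hPfix : ∀ m ∈ M, P m = m := by
    intro m hm
    rw [hPapp]
    exact Submodule.starProjection_eq_self_iff.mpr hm
  have hPorth : ∀ x : H, x - P x ∈ Mᗮ := fun x =>
    Submodule.sub_starProjection_mem_orthogonal x
  have hPzero : ∀ f ∈ Mᗮ, P f = 0 := by
    intro f hf
    rw [hPapp, Submodule.orthogonalProjectionOnto_apply_of_mem_orthogonal hf]
    rfl
  have hPsa : IsSelfAdjoint P := isSelfAdjoint_starProjection M
  -- invariance of Mᗮ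
  have hRiMo : ∀ f ∈ Mᗮ, Ri f ∈ Mᗮ := by
    intro f hf
    rw [Submodule.mem_orthogonal]
    intro m hm
    rw [hinRi m f]
    have : ⟪Ri m, f⟫ = 0 := (Submodule.mem_orthogonal M f).mp hf _ (hMGood.1 m hm)
    rw [this, neg_zero]
  have hAMo : ∀ f ∈ Mᗮ, A f ∈ Mᗮ := by
    intro f hf
    rw [Submodule.mem_orthogonal]
    intro m hm
    rw [← hinA1 m f]
    exact (Submodule.mem_orthogonal M f).mp hf _ (hMGood.2.1 m hm)
  have hRjMMo : ∀ m ∈ M, Rj m ∈ Mᗮ := by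
    intro m hm
    rw [Submodule.mem_orthogonal]
    intro u hu
    exact hMGood.2.2 u hu m hm
  -- Rj maps Mᗮ into M
  have hRjMoM : ∀ f ∈ Mᗮ, Rj f ∈ M := by
    intro f hf
    have hkey : Rj f - P (Rj f) = 0 := by
      refine key_max _ (hPorth (Rj f)) ?_
      intro m hm
      rw [inner_sub_left]
      have h1 : ⟪Rj f, Rj m⟫ = ⟪f, m⟫ := hRjRj f m
      have h2 : ⟪f, m⟫ = 0 := (Submodule.mem_orthogonal' M f).mp hf m hm
      have h3 : ⟪P (Rj f), Rj m⟫ = 0 := by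
        have := (Submodule.mem_orthogonal M (Rj m)).mp (hRjMMo m hm) _ (hPmem (Rj f))
        exact this
      rw [h1, h2, h3, sub_zero]
    have : Rj f = P (Rj f) := by
      have := sub_eq_zero.mp hkey
      exact this
    rw [this]
    exact hPmem _
  -- commutation relations for P
  have hdecomp : ∀ x : H, x = P x + (x - P x) := fun x => by abel
  have hPRi : ∀ x : H, P (Ri x) = Ri (P x) := by
    intro x
    conv_lhs => rw [hdecomp x]
    rw [map_add, map_add, hPfix _ (hMGood.1 _ (hPmem x)),
      hPzero _ (hRiMo _ (hPorth x)), add_zero]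
  have hPA : ∀ x : H, P (A x) = A (P x) := by
    intro x
    conv_lhs => rw [hdecomp x]
    rw [map_add, map_add, hPfix _ (hMGood.2.1 _ (hPmem x)),
      hPzero _ (hAMo _ (hPorth x)), add_zero]
  have hPRj : ∀ x : H, P (Rj x) = Rj x - Rj (P x) := by
    intro x
    conv_lhs => rw [hdecomp x]
    rw [map_add, map_add, hPzero _ (hRjMMo _ (hPmem x)),
      hPfix _ (hRjMoM _ (hPorth x)), zero_add, map_sub]
  -- the symmetry K = 2P - 1
  set K : H →L[ℝ] H := (2:ℝ) • P - 1 with hKdef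
  have hKapp : ∀ x : H, K x = (2:ℝ) • P x - x := by
    intro x
    rw [hKdef]
    simp [ContinuousLinearMap.sub_apply, ContinuousLinearMap.smul_apply,
      ContinuousLinearMap.one_apply]
  have hPP : ∀ x, P (P x) = P x := fun x => hPfix _ (hPmem x)
  have hKK : K * K = 1 := by
    ext x
    rw [ContinuousLinearMap.mul_apply, ContinuousLinearMap.one_apply,
      hKapp (K x), hKapp x, map_sub, map_smul, hPP]
    module
  have hKsa : star K = K := by
    rw [hKdef]
    simp [star_sub, star_smul, hPsa.star_eq]
  have hKRiop : K * Ri = Ri * K := by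
    ext x
    rw [ContinuousLinearMap.mul_apply, ContinuousLinearMap.mul_apply,
      hKapp (Ri x), hKapp x, hPRi, map_sub, map_smul]
  have hKAop : K * A = A * K := by
    ext x
    rw [ContinuousLinearMap.mul_apply, ContinuousLinearMap.mul_apply,
      hKapp (A x), hKapp x, hPA, map_sub, map_smul]
  have hKRjop : K * Rj = -(Rj * K) := by
    ext x
    rw [ContinuousLinearMap.neg_apply, ContinuousLinearMap.mul_apply,
      ContinuousLinearMap.mul_apply, hKapp (Rj x), hKapp x, hPRj,
      map_sub, map_smul]
    module
  refine ⟨Ri * K, ?_, ?_, ?_, ?_, ?_⟩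
  · rw [show Ri * K * (Ri * K) = Ri * (K * Ri) * K by noncomm_ring, hKRiop,
      show Ri * (Ri * K) * K = (Ri * Ri) * (K * K) by noncomm_ring, hKK, hRi2]
    noncomm_ring
  · rw [star_mul, hKsa, hRiS, mul_neg, hKRiop]
  · rw [mul_assoc, hKRiop, ← mul_assoc]
  · rw [mul_assoc, hKRjop, mul_neg, ← mul_assoc, hRiRj]
    noncomm_ring
  · rw [mul_assoc, hKAop, ← mul_assoc, ← hARi, mul_assoc]
open ContinuousLinearMap in
set_option maxHeartbeats 2000000 in
set_option synthInstance.maxHeartbeats 400000 in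
/-- on an infinite-dimensional quaternionic Hilbert space, viewed as a real
Hilbert space `H` with operators `Rᵢ, Rⱼ`, every bounded operator commuting with `Rᵢ` and
`Rⱼ` is a finite real linear combination of orthogonal operators commuting with `Rᵢ` and
`Rⱼ`. -/
theorem quaternionic_bounded_op_linear_combination_of_orthogonals
    {H : Type*} [NormedAddCommGroup H] [InnerProductSpace ℝ H] [CompleteSpace H]
    (hH : ¬ FiniteDimensional ℝ H)
    (Ri Rj : H →L[ℝ] H)
    (hRi2 : Ri ∘L Ri = -1) (hRj2 : Rj ∘L Rj = -1)
    (hRiRj : Ri ∘L Rj = -(Rj ∘L Ri))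
    (hRiAdj : ContinuousLinearMap.adjoint Ri = -Ri)
    (hRjAdj : ContinuousLinearMap.adjoint Rj = -Rj)
    (T : H →L[ℝ] H)
    (hTRi : T ∘L Ri = Ri ∘L T) (hTRj : T ∘L Rj = Rj ∘L T) :
    ∃ (n : ℕ) (c : Fin n → ℝ) (U : Fin n → (H →L[ℝ] H)),
      (∀ i, U i ∈ unitary (H →L[ℝ] H) ∧
        U i ∘L Ri = Ri ∘L U i ∧ U i ∘L Rj = Rj ∘L U i) ∧
      T = ∑ i, c i • U i := by
  haveI : Nontrivial H := by
    by_contra hnt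
    rw [not_nontrivial_iff_subsingleton] at hnt
    exact hH (Module.Finite.of_basis (Module.Basis.empty (ι := Fin 0) (R := ℝ) (M := H)))
  -- restate hypotheses multiplicatively
  have hRi2' : Ri * Ri = -1 := hRi2
  have hRj2' : Rj * Rj = -1 := hRj2
  have hRiRj' : Ri * Rj = -(Rj * Ri) := hRiRj
  have hRiS : star Ri = -Ri := by rw [star_eq_adjoint]; exact hRiAdj
  have hRjS : star Rj = -Rj := by rw [star_eq_adjoint]; exact hRjAdj
  have hTRi' : T * Ri = Ri * T := hTRi
  have hTRj' : T * Rj = Rj * T := hTRj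
  -- star T also commutes
  have hTsRi : star T * Ri = Ri * star T := by
    have h := congrArg star hTRi'
    rw [star_mul, star_mul, hRiS, neg_mul, mul_neg, neg_inj] at h
    exact h.symm
  have hTsRj : star T * Rj = Rj * star T := by
    have h := congrArg star hTRj'
    rw [star_mul, star_mul, hRjS, neg_mul, mul_neg, neg_inj] at h
    exact h.symm
  -- self-adjoint and skew-adjoint parts
  set Aop : H →L[ℝ] H := (2⁻¹ : ℝ) • (T + star T) with hAopDef
  set Bop : H →L[ℝ] H := (2⁻¹ : ℝ) • (T - star T) with hBopDef
  have hAsa : IsSelfAdjoint Aop := by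
    rw [IsSelfAdjoint, hAopDef, star_smul, star_add, star_star, star_trivial, add_comm]
  have hBskew : star Bop = -Bop := by
    rw [hBopDef, star_smul, star_sub, star_star, star_trivial, ← smul_neg, neg_sub]
  have hAopRi : Aop * Ri = Ri * Aop := by
    rw [hAopDef, smul_mul_assoc, mul_smul_comm, add_mul, mul_add, hTRi', hTsRi]
  have hAopRj : Aop * Rj = Rj * Aop := by
    rw [hAopDef, smul_mul_assoc, mul_smul_comm, add_mul, mul_add, hTRj', hTsRj]
  have hBopRi : Bop * Ri = Ri * Bop := by
    rw [hBopDef, smul_mul_assoc, mul_smul_comm, sub_mul, mul_sub, hTRi', hTsRi]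
  have hBopRj : Bop * Rj = Rj * Bop := by
    rw [hBopDef, smul_mul_assoc, mul_smul_comm, sub_mul, mul_sub, hTRj', hTsRj]
  -- scaling
  set cA : ℝ := ‖Aop‖ + 1 with hcA
  set cB : ℝ := ‖Bop‖ + 1 with hcB
  have hcApos : 0 < cA := by positivity
  have hcBpos : 0 < cB := by positivity
  set A0 : H →L[ℝ] H := cA⁻¹ • Aop with hA0def
  set B0 : H →L[ℝ] H := cB⁻¹ • Bop with hB0def
  have hA0 : cA • A0 = Aop := smul_inv_smul₀ (ne_of_gt hcApos) Aop
  have hB0 : cB • B0 = Bop := smul_inv_smul₀ (ne_of_gt hcBpos) Bop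
  have hA0norm : ‖A0‖ ≤ 1 := by
    rw [hA0def, norm_smul cA⁻¹ Aop, Real.norm_eq_abs, abs_of_pos (inv_pos.mpr hcApos)]
    rw [inv_mul_le_iff₀ hcApos, mul_one, hcA]
    linarith
  have hB0norm : ‖B0‖ ≤ 1 := by
    rw [hB0def, norm_smul cB⁻¹ Bop, Real.norm_eq_abs, abs_of_pos (inv_pos.mpr hcBpos)]
    rw [inv_mul_le_iff₀ hcBpos, mul_one, hcB]
    linarith
  have hA0sa : IsSelfAdjoint A0 := by
    rw [IsSelfAdjoint, hA0def, star_smul, star_trivial, hAsa.star_eq]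
  have hB0skew : star B0 = -B0 := by
    rw [hB0def, star_smul, star_trivial, hBskew, smul_neg]
  have hA0Ri : A0 * Ri = Ri * A0 := by
    rw [hA0def, smul_mul_assoc, mul_smul_comm, hAopRi]
  have hA0Rj : A0 * Rj = Rj * A0 := by
    rw [hA0def, smul_mul_assoc, mul_smul_comm, hAopRj]
  have hB0Ri : B0 * Ri = Ri * B0 := by
    rw [hB0def, smul_mul_assoc, mul_smul_comm, hBopRi]
  have hB0Rj : B0 * Rj = Rj * B0 := by
    rw [hB0def, smul_mul_assoc, mul_smul_comm, hBopRj]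
  -- the complex structure for the self-adjoint part
  obtain ⟨J, hJ2, hJs, hJRi, hJRj, hJA0⟩ :=
    exists_complex_structure Ri Rj A0 hRi2' hRj2' hRiRj' hRiS hRjS hA0sa hA0Ri hA0Rj
  -- square root for the self-adjoint part
  set XA : H →L[ℝ] H := A0 * A0 with hXAdef
  have hXAsa : IsSelfAdjoint XA := by
    rw [IsSelfAdjoint, hXAdef, star_mul, hA0sa.star_eq]
  have hXAnorm : ‖XA‖ ≤ 1 := by
    calc ‖A0 * A0‖ ≤ ‖A0‖ * ‖A0‖ := norm_mul_le _ _
      _ ≤ 1 := by nlinarith [norm_nonneg A0]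
  obtain ⟨S, hSS, hSsa, hScomm⟩ := exists_sqrt XA hXAnorm hXAsa
  have hA0XA : A0 * XA = XA * A0 := by rw [hXAdef]; noncomm_ring
  have hJXA : J * XA = XA * J := by
    rw [hXAdef, ← mul_assoc, hJA0, mul_assoc, hJA0, mul_assoc]
  have hRiXA : Ri * XA = XA * Ri := by
    rw [hXAdef, ← mul_assoc, ← hA0Ri, mul_assoc, ← hA0Ri, mul_assoc]
  have hRjXA : Rj * XA = XA * Rj := by
    rw [hXAdef, ← mul_assoc, ← hA0Rj, mul_assoc, ← hA0Rj, mul_assoc]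
  have hSA0 : A0 * S = S * A0 := hScomm A0 hA0XA
  have hSJ : J * S = S * J := hScomm J hJXA
  have hSRi : Ri * S = S * Ri := hScomm Ri hRiXA
  have hSRj : Rj * S = S * Rj := hScomm Rj hRjXA
  -- the unitary for the self-adjoint part
  set U : H →L[ℝ] H := A0 + J * S with hUdef
  have hUstar : star U = A0 - J * S := by
    rw [hUdef, star_add, hA0sa.star_eq, star_mul, hSsa.star_eq, hJs, mul_neg, ← hSJ]
    abel
  have hJSA0 : A0 * (J * S) = (J * S) * A0 := by
    rw [← mul_assoc, hJA0.symm, mul_assoc, hSA0, mul_assoc]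
  have hJSJS : (J * S) * (J * S) = -(1 - XA) := by
    calc (J * S) * (J * S) = J * (S * J) * S := by noncomm_ring
      _ = J * (J * S) * S := by rw [hSJ]
      _ = (J * J) * (S * S) := by noncomm_ring
      _ = -(1 - XA) := by rw [hJ2, hSS]; noncomm_ring
  have hUunit1 : star U * U = 1 := by
    rw [hUstar, hUdef]
    have key : (A0 - J*S) * (A0 + J*S)
        = A0*A0 - (J*S)*(J*S) + (A0*(J*S) - (J*S)*A0) := by noncomm_ring
    rw [key, hJSA0, hJSJS, ← hXAdef]
    noncomm_ring
  have hUunit2 : U * star U = 1 := by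
    rw [hUstar, hUdef]
    have key : (A0 + J*S) * (A0 - J*S)
        = A0*A0 - (J*S)*(J*S) - (A0*(J*S) - (J*S)*A0) := by noncomm_ring
    rw [key, hJSA0, hJSJS, ← hXAdef]
    noncomm_ring
  have hURi : U * Ri = Ri * U := by
    rw [hUdef, add_mul, mul_add, hA0Ri, mul_assoc, ← hSRi, ← mul_assoc, hJRi, mul_assoc]
  have hURj : U * Rj = Rj * U := by
    rw [hUdef, add_mul, mul_add, hA0Rj, mul_assoc, ← hSRj, ← mul_assoc, hJRj, mul_assoc]
  have hUsRi : star U * Ri = Ri * star U := by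
    rw [hUstar, sub_mul, mul_sub, hA0Ri, mul_assoc, ← hSRi, ← mul_assoc, hJRi, mul_assoc]
  have hUsRj : star U * Rj = Rj * star U := by
    rw [hUstar, sub_mul, mul_sub, hA0Rj, mul_assoc, ← hSRj, ← mul_assoc, hJRj, mul_assoc]
  -- square root for the skew part
  set XB : H →L[ℝ] H := -(B0 * B0) with hXBdef
  have hXBsa : IsSelfAdjoint XB := by
    rw [IsSelfAdjoint, hXBdef, star_neg, star_mul, hB0skew, neg_mul, mul_neg, neg_neg]
  have hXBnorm : ‖XB‖ ≤ 1 := by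
    rw [hXBdef, norm_neg]
    calc ‖B0 * B0‖ ≤ ‖B0‖ * ‖B0‖ := norm_mul_le _ _
      _ ≤ 1 := by nlinarith [norm_nonneg B0]
  obtain ⟨S', hS'S', hS'sa, hS'comm⟩ := exists_sqrt XB hXBnorm hXBsa
  have hS'sq : S' * S' = 1 + B0 * B0 := by rw [hS'S', hXBdef]; noncomm_ring
  have hB0XB : B0 * XB = XB * B0 := by rw [hXBdef]; noncomm_ring
  have hRiXB : Ri * XB = XB * Ri := by
    rw [hXBdef, mul_neg, neg_mul, ← mul_assoc, ← hB0Ri, mul_assoc, ← hB0Ri, mul_assoc]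
  have hRjXB : Rj * XB = XB * Rj := by
    rw [hXBdef, mul_neg, neg_mul, ← mul_assoc, ← hB0Rj, mul_assoc, ← hB0Rj, mul_assoc]
  have hS'B0 : B0 * S' = S' * B0 := hS'comm B0 hB0XB
  have hS'Ri : Ri * S' = S' * Ri := hS'comm Ri hRiXB
  have hS'Rj : Rj * S' = S' * Rj := hS'comm Rj hRjXB
  -- the unitary for the skew part
  set V : H →L[ℝ] H := B0 + S' with hVdef
  have hVstar : star V = S' - B0 := by
    rw [hVdef, star_add, hB0skew, hS'sa.star_eq]
    noncomm_ring
  have hVunit1 : star V * V = 1 := by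
    rw [hVstar, hVdef]
    have key : (S' - B0) * (B0 + S')
        = S' * S' - B0 * B0 + (S' * B0 - B0 * S') := by noncomm_ring
    rw [key, hS'sq, ← hS'B0]
    noncomm_ring
  have hVunit2 : V * star V = 1 := by
    rw [hVstar, hVdef]
    have key : (B0 + S') * (S' - B0)
        = S' * S' - B0 * B0 - (S' * B0 - B0 * S') := by noncomm_ring
    rw [key, hS'sq, ← hS'B0]
    noncomm_ring
  have hVRi : V * Ri = Ri * V := by
    rw [hVdef, add_mul, mul_add, hB0Ri, hS'Ri]
  have hVRj : V * Rj = Rj * V := by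
    rw [hVdef, add_mul, mul_add, hB0Rj, hS'Rj]
  have hVsRi : star V * Ri = Ri * star V := by
    rw [hVstar, sub_mul, mul_sub, hB0Ri, hS'Ri]
  have hVsRj : star V * Rj = Rj * star V := by
    rw [hVstar, sub_mul, mul_sub, hB0Rj, hS'Rj]
  -- assemble
  refine ⟨4, ![cA/2, cA/2, cB/2, -(cB/2)], ![U, star U, V, star V], ?_, ?_⟩
  · have hUmem : U ∈ unitary (H →L[ℝ] H) := Unitary.mem_iff.mpr ⟨hUunit1, hUunit2⟩
    have hVmem : V ∈ unitary (H →L[ℝ] H) := Unitary.mem_iff.mpr ⟨hVunit1, hVunit2⟩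
    intro i
    fin_cases i
    · exact ⟨hUmem, hURi, hURj⟩
    · exact ⟨Unitary.star_mem hUmem, hUsRi, hUsRj⟩
    · exact ⟨hVmem, hVRi, hVRj⟩
    · exact ⟨Unitary.star_mem hVmem, hVsRi, hVsRj⟩
  · have hT : T = cA • A0 + cB • B0 := by
      rw [hA0, hB0, hAopDef, hBopDef]
      module
    rw [Fin.sum_univ_four]
    simp only [Matrix.cons_val_zero, Matrix.cons_val_one, Matrix.head_cons,
      Matrix.cons_val_two, Matrix.tail_cons, Matrix.cons_val_three]
    rw [hT, hUstar, hUdef, hVstar, hVdef]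
    module
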